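/- arXiv:1403.2620 — 7 statements merged into one kernel-verified Lean document; each statement's English description precedes it below -/
import Mathlib

section
/- Fix λ > 0. Define piecewise constant coefficients on ℝ³ by D̃(x,y,z) = μ̃(x,y,z) = 1 if y ≥ 0 and D̃(x,y,z) = μ̃(x,y,z) = λ if y < 0, and Γ̃(x,y,z) = 1 if y ≥ 0 and Γ̃(x,y,z) = 1/λ if y < 0. Then u(x,y,z) = e^x is a weak solution of −div(D̃ ∇u) + μ̃ u = 0 on ℝ³, i.e. for every continuously differentiable, compactly supported φ : ℝ³ → ℝ one has ∫_{ℝ³} ( D̃(p) ⟨∇u(p), ∇φ(p)⟩ + μ̃(p) u(p) φ(p) ) dp = 0. Moreover the photoacoustic data Γ̃(p) μ̃(p) u(p) equals e^x for every p ∈ ℝ³, independently of λ. Hence the parameter sets (μ, D, Γ) ≡ (1,1,1) and (μ̃, D̃, Γ̃) generate identical photoacoustic data. -/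
open MeasureTheory RealInnerProductSpace

abbrev E3 := EuclideanSpace ℝ (Fin 3)

/-- The integral over `ℝ` of the derivative of a `C¹` compactly supported function is `0`. -/
lemma aux_integral_deriv_eq_zero (f : ℝ → ℝ) (hf : ContDiff ℝ 1 f)
    (h2f : HasCompactSupport f) : ∫ x : ℝ, deriv f x = 0 := by
  have hc : Continuous (deriv f) := hf.continuous_deriv le_rfl
  have hint : Integrable (deriv f) := hc.integrable_of_hasCompactSupport h2f.deriv
  have h := intervalIntegral.integral_Iic_add_Ioi (b := (0:ℝ))
    hint.integrableOn hint.integrableOn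
  rw [← h, HasCompactSupport.integral_Iic_deriv_eq hf h2f 0,
    HasCompactSupport.integral_Ioi_deriv_eq hf h2f 0]
  ring

/-- Key integral identity: for any bounded measurable weight depending only on the second
coordinate, the integral of the weighted `x`-derivative of a compactly supported `C¹` function
on `ℝ³` vanishes. -/
lemma aux_key (lam : ℝ) (hlam : 0 < lam) (ψ : E3 → ℝ) (hψ : ContDiff ℝ 1 ψ)
    (hψc : HasCompactSupport ψ) :
    ∫ p : E3, (if 0 ≤ p 1 then (1:ℝ) else lam) *
      fderiv ℝ ψ p (EuclideanSpace.single 0 1) = 0 := by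
  set e0 : E3 := EuclideanSpace.single 0 1 with he0
  set g : E3 → ℝ := fun p => fderiv ℝ ψ p e0 with hg
  have hgcont : Continuous g := (hψ.continuous_fderiv one_ne_zero).clm_apply continuous_const
  have hgcs : HasCompactSupport g := HasCompactSupport.fderiv_apply (𝕜 := ℝ) hψc e0
  have hgint : Integrable g := hgcont.integrable_of_hasCompactSupport hgcs
  set c : ℝ → ℝ := fun t => if 0 ≤ t then (1:ℝ) else lam with hcdef
  set F : E3 → ℝ := fun p => c (p 1) * g p with hF
  have hcbound : ∀ t : ℝ, |c t| ≤ max 1 lam := by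
    intro t
    by_cases h : 0 ≤ t <;> simp [hcdef, h, abs_of_pos, hlam, le_max_left, le_max_right,
      abs_of_pos hlam]
  have hcmeas : Measurable fun p : E3 => c (p 1) := by
    apply Measurable.ite _ measurable_const measurable_const
    exact measurableSet_le measurable_const (EuclideanSpace.proj (1 : Fin 3)).continuous.measurable
  have hFint : Integrable F := by
    refine Integrable.mono' (hgint.norm.const_mul (max 1 lam))
      (hcmeas.aestronglyMeasurable.mul hgcont.aestronglyMeasurable) ?_
    filter_upwards with p
    rw [hF, norm_mul]
    exact mul_le_mul_of_nonneg_right (hcbound _) (norm_nonneg _)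
  -- transfer to `Fin 3 → ℝ` and then to `ℝ × (Fin 2 → ℝ)`
  have hvp1 := (EuclideanSpace.volume_preserving_symm_measurableEquiv_toLp (Fin 3)).symm
  have hvp2 := (MeasureTheory.volume_preserving_piFinSuccAbove (fun _ : Fin 3 => ℝ) 0).symm
  set m1 := (MeasurableEquiv.toLp 2 (Fin 3 → ℝ)).symm.symm
  set m2 := (MeasurableEquiv.piFinSuccAbove (fun _ : Fin 3 => ℝ) 0).symm
  have h1 : ∫ p : E3, F p = ∫ q : Fin 3 → ℝ, F (m1 q) :=
    (hvp1.integral_comp (MeasurableEquiv.measurableEmbedding _) F).symm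
  have h2 : ∫ q : Fin 3 → ℝ, F (m1 q) = ∫ z : ℝ × (Fin 2 → ℝ), F (m1 (m2 z)) :=
    (hvp2.integral_comp (MeasurableEquiv.measurableEmbedding _) (fun q => F (m1 q))).symm
  rw [h1, h2]
  have hintz : Integrable (fun z : ℝ × (Fin 2 → ℝ) => F (m1 (m2 z))) := by
    have i1 : Integrable (fun q : Fin 3 → ℝ => F (m1 q)) :=
      (hvp1.integrable_comp_emb (MeasurableEquiv.measurableEmbedding _)).2 hFint
    exact (hvp2.integrable_comp_emb (MeasurableEquiv.measurableEmbedding _)).2 i1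
  rw [MeasureTheory.Measure.volume_eq_prod] at hintz ⊢
  rw [MeasureTheory.integral_prod_symm _ hintz]
  -- now fix the last two coordinates
  have hinner : ∀ w : Fin 2 → ℝ, ∫ x : ℝ, F (m1 (m2 (x, w))) = 0 := by
    intro w
    -- the slice map
    set m : ℝ → E3 := fun x => m1 (Fin.insertNth 0 x w) with hm
    have hmz : ∀ x : ℝ, m1 (m2 (x, w)) = m x := by
      intro x
      rw [hm]
      rfl
    have hmi : ∀ (x : ℝ) (i : Fin 3),
        m x i = Fin.insertNth (α := fun _ : Fin 3 => ℝ) 0 x w i := by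
      intro x i; rw [hm]; exact rfl
    have hcons : ∀ x : ℝ, Fin.insertNth (α := fun _ : Fin 3 => ℝ) 0 x w = Fin.cons x w :=
      fun x => Fin.insertNth_zero' x w
    have hm0 : ∀ x : ℝ, m x 0 = x := by
      intro x; rw [hmi x 0, hcons x]; exact rfl
    have hm1 : ∀ x : ℝ, m x 1 = w 0 := by
      intro x; rw [hmi x 1, hcons x]; exact Fin.cons_succ (α := fun _ : Fin 3 => ℝ) x w (0 : Fin 2)
    have hmrep : ∀ x : ℝ, m x = x • e0 + m 0 := by
      intro x
      ext i
      have hlhs : (x • e0 + m 0) i = x * e0 i + m 0 i := rfl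
      rw [hlhs, hmi x i, hmi 0 i, hcons x, hcons 0]
      refine Fin.cases ?_ (fun j => ?_) i
      · simp [he0, EuclideanSpace.single_apply]
      · simp [he0, EuclideanSpace.single_apply, Fin.succ_ne_zero]
    have hmfun : m = fun x => x • e0 + m 0 := funext hmrep
    have hmd : ∀ x : ℝ, HasDerivAt m e0 x := by
      intro x
      rw [hmfun]
      have h := ((hasDerivAt_id x).smul_const e0).add_const (m 0)
      simpa using h
    have hmcd : ContDiff ℝ 1 m := by
      rw [hmfun]
      exact (contDiff_id.smul contDiff_const).add contDiff_const
    set f : ℝ → ℝ := fun x => ψ (m x) with hf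
    have hfcd : ContDiff ℝ 1 f := hψ.comp hmcd
    have hfcs : HasCompactSupport f := by
      refine HasCompactSupport.intro (K := (fun p : E3 => p 0) '' tsupport ψ)
        (hψc.image (EuclideanSpace.proj (0 : Fin 3)).continuous) ?_
      intro x hx
      by_contra h
      exact hx ⟨m x, subset_tsupport ψ h, hm0 x⟩
    have hfd : ∀ x : ℝ, deriv f x = g (m x) := by
      intro x
      have hψd : HasFDerivAt ψ (fderiv ℝ ψ (m x)) (m x) :=
        ((hψ.differentiable one_ne_zero) (m x)).hasFDerivAt
      exact (hψd.comp_hasDerivAt x (hmd x)).deriv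
    have : (fun x : ℝ => F (m1 (m2 (x, w)))) = fun x : ℝ => c (w 0) * deriv f x := by
      funext x
      rw [hmz x]
      show c (m x 1) * g (m x) = c (w 0) * deriv f x
      rw [hm1 x, hfd x]
    rw [this, MeasureTheory.integral_const_mul,
      aux_integral_deriv_eq_zero f hfcd hfcs, mul_zero]
  rw [show (fun w : Fin 2 → ℝ => ∫ x : ℝ, F (m1 (m2 (x, w)))) = fun _ => (0:ℝ) from
    funext hinner]
  simp

/-- for any `λ > 0`, the piecewise constant parameters
`D̃ = μ̃ = 1` on `{y ≥ 0}`, `= λ` on `{y < 0}` and `Γ̃ = 1` on `{y ≥ 0}`, `= 1/λ` on `{y < 0}`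
admit `u(x,y,z) = e^x` as a weak solution of `−div(D̃∇u) + μ̃u = 0` on `ℝ³`, and the
photoacoustic data `Γ̃μ̃u` equals `e^x = 1·1·u`, i.e. the same data as `(μ,D,Γ) ≡ (1,1,1)`. -/
theorem stmt0 (lam : ℝ) (hlam : 0 < lam)
    (u Dt muT Gt : E3 → ℝ)
    (hu : ∀ p : E3, u p = Real.exp (p 0))
    (hD : ∀ p : E3, Dt p = if 0 ≤ p 1 then 1 else lam)
    (hmu : ∀ p : E3, muT p = if 0 ≤ p 1 then 1 else lam)
    (hG : ∀ p : E3, Gt p = if 0 ≤ p 1 then 1 else 1 / lam) :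
    (∀ φ : E3 → ℝ, ContDiff ℝ 1 φ → HasCompactSupport φ →
      ∫ p : E3, (Dt p * ⟪gradient u p, gradient φ p⟫ + muT p * u p * φ p) = 0)
    ∧ (∀ p : E3, Gt p * muT p * u p = Real.exp (p 0))
    ∧ (∀ p : E3, Gt p * muT p * u p = (1 : ℝ) * 1 * u p) := by
  refine ⟨?_, ?_, ?_⟩
  · intro φ hφ hφc
    set e0 : E3 := EuclideanSpace.single 0 1 with he0
    set ψ : E3 → ℝ := fun p => Real.exp (p 0) * φ p with hψdef
    have hexp : ContDiff ℝ 1 (fun p : E3 => Real.exp (p 0)) :=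
      (Real.contDiff_exp.of_le le_top).comp
        (by have := (EuclideanSpace.proj (0 : Fin 3) : E3 →L[ℝ] ℝ).contDiff (n := 1); exact this)
    have hψ : ContDiff ℝ 1 ψ := hexp.mul hφ
    have hψc : HasCompactSupport ψ := hφc.mul_left
    -- derivative of `u`
    have hE : ∀ p : E3, HasFDerivAt (fun q : E3 => Real.exp (q 0))
        (Real.exp (p 0) • (EuclideanSpace.proj (0 : Fin 3) : E3 →L[ℝ] ℝ)) p := by
      intro p
      have hproj : HasFDerivAt (fun q : E3 => q 0)
          (EuclideanSpace.proj (0 : Fin 3) : E3 →L[ℝ] ℝ) p :=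
        (EuclideanSpace.proj (0 : Fin 3) : E3 →L[ℝ] ℝ).hasFDerivAt
      exact (Real.hasDerivAt_exp (p 0)).comp_hasFDerivAt p hproj
    have huder : ∀ p : E3, HasFDerivAt u
        (Real.exp (p 0) • (EuclideanSpace.proj (0 : Fin 3) : E3 →L[ℝ] ℝ)) p := by
      intro p
      have hfun : u = fun q : E3 => Real.exp (q 0) := funext hu
      rw [hfun]
      exact hE p
    -- pointwise identity
    have hpt : ∀ p : E3,
        Dt p * ⟪gradient u p, gradient φ p⟫ + muT p * u p * φ p
          = (if 0 ≤ p 1 then (1:ℝ) else lam) * fderiv ℝ ψ p e0 := by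
      intro p
      have hgradinner : ∀ (f : E3 → ℝ) (v : E3), ⟪gradient f p, v⟫ = fderiv ℝ f p v := by
        intro f v
        rw [gradient]
        exact InnerProductSpace.toDual_symm_apply
      have hφd : HasFDerivAt φ (fderiv ℝ φ p) p := ((hφ.differentiable one_ne_zero) p).hasFDerivAt
      have hψfd : fderiv ℝ ψ p e0
          = Real.exp (p 0) * fderiv ℝ φ p e0 + Real.exp (p 0) * φ p := by
        have hprod : HasFDerivAt ψ _ p := (hE p).mul hφd
        -- `hprod : HasFDerivAt ψ ((fun q => Real.exp (q 0)) p • fderiv ℝ φ p + φ p • _) p`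
        rw [hprod.fderiv]
        simp [he0, EuclideanSpace.single_apply, mul_comm]
      have h1 : ⟪gradient u p, gradient φ p⟫ = Real.exp (p 0) * fderiv ℝ φ p e0 := by
        rw [hgradinner u (gradient φ p), (huder p).fderiv]
        have : (Real.exp (p 0) • (EuclideanSpace.proj (0 : Fin 3) : E3 →L[ℝ] ℝ))
            (gradient φ p) = Real.exp (p 0) * (gradient φ p) 0 := rfl
        rw [this]
        congr 1
        have h2 : (gradient φ p) 0 = ⟪gradient φ p, e0⟫ := by
          rw [he0, EuclideanSpace.inner_single_right]
          simp
        rw [h2, hgradinner φ e0]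
      rw [h1, hψfd, hu p, hD p, hmu p]
      ring
    rw [show (fun p : E3 => Dt p * ⟪gradient u p, gradient φ p⟫ + muT p * u p * φ p)
        = fun p : E3 => (if 0 ≤ p 1 then (1:ℝ) else lam) * fderiv ℝ ψ p e0 from funext hpt]
    exact aux_key lam hlam ψ hψ hψc
  · intro p
    rw [hG p, hmu p, hu p]
    by_cases h : 0 ≤ p 1 <;> simp [h]
    field_simp
  · intro p
    rw [hG p, hmu p, hu p]
    by_cases h : 0 ≤ p 1 <;> simp [h, hu p]
    field_simp
end

section
/- Let μ_m, D_m, Γ_m, μ_n, D_n, Γ_n be positive real constants, let u_m, u_n : ℝ³ → ℝ be functions, and set H_m = Γ_m μ_m u_m and H_n = Γ_n μ_n u_n. Then: (i) if y ∈ ℝ³ satisfies u_m(y) = u_n(y) and u_n(y) ≠ 0, then Γ_m μ_m = (H_m(y)/H_n(y)) · Γ_n μ_n; (ii) if x ∈ ℝ³ is a point where u_m and u_n are differentiable, ν ∈ ℝ³ is a unit vector with D_m ⟨∇u_m(x), ν⟩ = D_n ⟨∇u_n(x), ν⟩ and ⟨∇u_n(x), ν⟩ ≠ 0, then D_m/(Γ_m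 μ_m) = (⟨∇H_n(x), ν⟩/⟨∇H_m(x), ν⟩) · D_n/(Γ_n μ_n); (iii) if z ∈ ℝ³ is a point where u_m is twice differentiable with D_m Δu_m(z) = μ_m u_m(z) and u_m(z) ≠ 0, then μ_m/D_m = ΔH_m(z)/H_m(z). Consequently, setting A = Γ_m μ_m, B = D_m/(Γ_m μ_m), C = μ_m/D_m, the triple (μ_m, D_m, Γ_m) equals (A·B·C, A·B, 1/(B·C)) and is uniquely determined by the values of H_m, H_n, their gradients and Laplacians at y, x, z together with the reference values (μ_n, D_n, Γ_n). -/
open RealInnerProductSpace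

/-- The Laplacian: the sum of the second partial derivatives. -/
noncomputable def lap (u : E3 → ℝ) (p : E3) : ℝ :=
  ∑ i : Fin 3, fderiv ℝ (fun q => fderiv ℝ u q (EuclideanSpace.single i 1)) p
    (EuclideanSpace.single i 1)

lemma inner_grad (f : E3 → ℝ) (x v : E3) : ⟪gradient f x, v⟫ = fderiv ℝ f x v := by
  rw [gradient, InnerProductSpace.toDual_symm_apply]

lemma fderiv_cmul (c : ℝ) (hc : c ≠ 0) (u : E3 → ℝ) (q : E3) :
    fderiv ℝ (fun p => c * u p) q = c • fderiv ℝ u q := by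
  by_cases h : DifferentiableAt ℝ u q
  · exact fderiv_const_mul h c
  · rw [fderiv_zero_of_not_differentiableAt h, smul_zero,
      fderiv_zero_of_not_differentiableAt]
    intro hd
    have h2 : DifferentiableAt ℝ (fun p => c⁻¹ * (c * u p)) q := hd.const_mul c⁻¹
    simp only [← mul_assoc, inv_mul_cancel₀ hc, one_mul] at h2
    exact h h2

lemma lap_cmul (c : ℝ) (hc : c ≠ 0) (u : E3 → ℝ) (z : E3)
    (hu2 : DifferentiableAt ℝ (fderiv ℝ u) z) :
    lap (fun p => c * u p) z = c * lap u z := by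
  unfold lap
  rw [Finset.mul_sum]
  refine Finset.sum_congr rfl fun i _ => ?_
  have h1 : (fun q => fderiv ℝ (fun p => c * u p) q (EuclideanSpace.single i 1))
      = fun q => c * fderiv ℝ u q (EuclideanSpace.single i 1) := by
    ext q; rw [fderiv_cmul c hc]; simp
  have hd : DifferentiableAt ℝ (fun q => fderiv ℝ u q (EuclideanSpace.single i 1)) z := by
    exact (ContinuousLinearMap.apply ℝ ℝ (EuclideanSpace.single i 1)).differentiableAt.comp z hu2
  rw [h1, fderiv_const_mul hd c]
  simp

/-- core step of Proposition 3.2, equations (14)–(17): with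
`H_m = Γ_m μ_m u_m` and `H_n = Γ_n μ_n u_n`,
(i) continuity `u_m(y) = u_n(y) ≠ 0` gives `Γ_m μ_m = (H_m(y)/H_n(y)) Γ_n μ_n`;
(ii) the transmission condition at a point of non-tangential gradient gives
`D_m/(Γ_m μ_m) = (⟨∇H_n, ν⟩/⟨∇H_m, ν⟩) · D_n/(Γ_n μ_n)`;
(iii) the equation `D_m Δu_m = μ_m u_m` gives `μ_m/D_m = ΔH_m/H_m`;
and `(μ_m, D_m, Γ_m) = (A·B·C, A·B, 1/(B·C))` for `A = Γ_m μ_m`, `B = D_m/(Γ_m μ_m)`,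
`C = μ_m/D_m`. -/
theorem stmt6 (mum Dm Γm mun Dn Γn : ℝ)
    (hmum : 0 < mum) (hDm : 0 < Dm) (hΓm : 0 < Γm)
    (hmun : 0 < mun) (hDn : 0 < Dn) (hΓn : 0 < Γn)
    (um un : E3 → ℝ)
    (Hm Hn : E3 → ℝ)
    (hHm : ∀ p : E3, Hm p = Γm * mum * um p)
    (hHn : ∀ p : E3, Hn p = Γn * mun * un p) :
    (∀ y : E3, um y = un y → un y ≠ 0 →
      Γm * mum = (Hm y / Hn y) * (Γn * mun)) ∧
    (∀ (x : E3) (ν : E3), ‖ν‖ = 1 →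
      DifferentiableAt ℝ um x → DifferentiableAt ℝ un x →
      Dm * ⟪gradient um x, ν⟫ = Dn * ⟪gradient un x, ν⟫ →
      ⟪gradient un x, ν⟫ ≠ 0 →
      Dm / (Γm * mum) = (⟪gradient Hn x, ν⟫ / ⟪gradient Hm x, ν⟫) * (Dn / (Γn * mun))) ∧
    (∀ z : E3, DifferentiableAt ℝ um z → DifferentiableAt ℝ (fderiv ℝ um) z →
      Dm * lap um z = mum * um z → um z ≠ 0 →
      mum / Dm = lap Hm z / Hm z) ∧
    (mum = (Γm * mum) * (Dm / (Γm * mum)) * (mum / Dm) ∧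
      Dm = (Γm * mum) * (Dm / (Γm * mum)) ∧
      Γm = 1 / ((Dm / (Γm * mum)) * (mum / Dm))) := by
  have hcm : Γm * mum ≠ 0 := by positivity
  have hcn : Γn * mun ≠ 0 := by positivity
  have hHm' : Hm = fun p => Γm * mum * um p := funext hHm
  have hHn' : Hn = fun p => Γn * mun * un p := funext hHn
  refine ⟨?_, ?_, ?_, ?_⟩
  · intro y hy hny
    rw [hHm y, hHn y, hy]
    field_simp
  · intro x ν hν hum hun htr hnt
    have hum' : ⟪gradient um x, ν⟫ ≠ 0 := by
      intro h
      have h0 : Dn * ⟪gradient un x, ν⟫ = 0 := by rw [← htr, h, mul_zero]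
      exact hnt ((mul_eq_zero.mp h0).resolve_left hDn.ne')
    have gm : ⟪gradient Hm x, ν⟫ = (Γm * mum) * ⟪gradient um x, ν⟫ := by
      rw [inner_grad, inner_grad, hHm', fderiv_cmul _ hcm]
      simp
    have gn : ⟪gradient Hn x, ν⟫ = (Γn * mun) * ⟪gradient un x, ν⟫ := by
      rw [inner_grad, inner_grad, hHn', fderiv_cmul _ hcn]
      simp
    rw [gm, gn]
    have hDn0 : Dn ≠ 0 := hDn.ne'
    set a := ⟪gradient um x, ν⟫ with ha
    set b := ⟪gradient un x, ν⟫ with hb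
    field_simp
    linear_combination htr
  · intro z hz1 hz2 heq hnz
    have hl : lap Hm z = (Γm * mum) * lap um z := by
      rw [hHm']; exact lap_cmul _ hcm um z hz2
    rw [hl, hHm z]
    rw [mul_div_mul_left _ _ hcm]
    have : lap um z = mum * um z / Dm := by
      field_simp
      linarith [heq]
    rw [this]
    field_simp
  · refine ⟨?_, ?_, ?_⟩
    · field_simp
    · field_simp
    · field_simp
end

section
/- Let Ω ⊆ ℝ³ be a nonempty open set and let μ, μ̃, D, Γ be positive real constants. Let u, ũ : Ω → ℝ be twice differentiable with u(p) > 0 and ũ(p) > 0 for all p ∈ Ω. Suppose D Δu = μ u and D Δũ = μ̃ ũ at every point of Ω, and Γ μ u = Γ μ̃ ũ at every point of Ω (the two parameter sets (μ, D, Γ) and (μ̃, D, Γ) produce the same photoacoustic data). Then μ = μ̃ and u = ũ on Ω. -/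
lemma lap_congr {f g : E3 → ℝ} {p : E3} (h : f =ᶠ[nhds p] g) : lap f p = lap g p := by
  unfold lap
  refine Finset.sum_congr rfl fun i _ => ?_
  have h1 : fderiv ℝ f =ᶠ[nhds p] fderiv ℝ g := h.fderiv
  have h2 : (fun q => fderiv ℝ f q (EuclideanSpace.single i 1)) =ᶠ[nhds p]
      (fun q => fderiv ℝ g q (EuclideanSpace.single i 1)) := h1.mono fun q hq => by simp only [hq]
  rw [h2.fderiv_eq]

lemma lap_const_mul (f : E3 → ℝ) (c : ℝ) (p : E3) (s : Set E3) (hs : IsOpen s) (hp : p ∈ s)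
    (hd : ∀ q ∈ s, DifferentiableAt ℝ f q) (hd2 : DifferentiableAt ℝ (fderiv ℝ f) p) :
    lap (fun q => c * f q) p = c * lap f p := by
  unfold lap
  rw [Finset.mul_sum]
  refine Finset.sum_congr rfl fun i _ => ?_
  set e := (EuclideanSpace.single i 1 : E3) with he
  have hEq : (fun q => fderiv ℝ (fun x => c * f x) q e) =ᶠ[nhds p]
      (fun q => c * fderiv ℝ f q e) := by
    filter_upwards [hs.mem_nhds hp] with q hq
    rw [fderiv_const_mul (hd q hq) c]
    simp
  have hdf : DifferentiableAt ℝ (fun q => fderiv ℝ f q e) p :=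
    hd2.clm_apply (differentiableAt_const e)
  rw [hEq.fderiv_eq, fderiv_const_mul hdf c]
  simp

/-- uniqueness in Proposition 3.3, pair `(D, Γ)` known: if two twice
differentiable positive fluences `u, ũ` on a nonempty open `Ω` satisfy `D Δu = μ u`,
`D Δũ = μ̃ ũ` and produce the same data `Γμu = Γμ̃ũ`, then `μ = μ̃` and `u = ũ`. -/
theorem stmt8 (Ω : Set E3) (hΩ : IsOpen Ω) (hne : Ω.Nonempty)
    (mu muT D Γ : ℝ) (hmu : 0 < mu) (hmuT : 0 < muT) (hD : 0 < D) (hΓ : 0 < Γ)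
    (u ut : E3 → ℝ)
    (hdiff : ∀ p ∈ Ω, DifferentiableAt ℝ u p ∧ DifferentiableAt ℝ (fderiv ℝ u) p)
    (hdifft : ∀ p ∈ Ω, DifferentiableAt ℝ ut p ∧ DifferentiableAt ℝ (fderiv ℝ ut) p)
    (hpos : ∀ p ∈ Ω, 0 < u p) (hposT : ∀ p ∈ Ω, 0 < ut p)
    (heq : ∀ p ∈ Ω, D * lap u p = mu * u p)
    (heqt : ∀ p ∈ Ω, D * lap ut p = muT * ut p)
    (hdata : ∀ p ∈ Ω, Γ * mu * u p = Γ * muT * ut p) :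
    mu = muT ∧ (∀ p ∈ Ω, u p = ut p) := by
  have hdata' : ∀ p ∈ Ω, mu * u p = muT * ut p := by
    intro p hp
    have := hdata p hp
    have hΓ' := hΓ.ne'
    nlinarith [hdata p hp]
  have hmuEq : mu = muT := by
    obtain ⟨p, hp⟩ := hne
    have hEq : (fun q => mu * u q) =ᶠ[nhds p] (fun q => muT * ut q) := by
      filter_upwards [hΩ.mem_nhds hp] with q hq using hdata' q hq
    have h1 : lap (fun q => mu * u q) p = mu * lap u p :=
      lap_const_mul u mu p Ω hΩ hp (fun q hq => (hdiff q hq).1) (hdiff p hp).2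
    have h2 : lap (fun q => muT * ut q) p = muT * lap ut p :=
      lap_const_mul ut muT p Ω hΩ hp (fun q hq => (hdifft q hq).1) (hdifft p hp).2
    have key : mu * lap u p = muT * lap ut p := by rw [← h1, ← h2, lap_congr hEq]
    -- D * (mu * lap u p) = mu * (mu * u p);  D * (muT * lap ut p) = muT * (muT * ut p)
    have e1 := heq p hp
    have e2 := heqt p hp
    have hd := hdata' p hp
    have hup := hpos p hp
    -- mu^2 * u p = muT^2 * ut p = muT * (mu * u p)
    have : mu * (mu * u p) = muT * (mu * u p) := by nlinarith
    have hx : (0:ℝ) < mu * u p := mul_pos hmu hup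
    exact mul_right_cancel₀ hx.ne' this
  refine ⟨hmuEq, fun p hp => ?_⟩
  have := hdata' p hp
  rw [hmuEq] at this
  exact mul_left_cancel₀ hmuT.ne' this
end

section
/- Let Ω ⊆ ℝ³ be a nonempty open set, x₀ ∈ Ω, and let μ, D, Γ, D̃, Γ̃ be positive real constants. Let u, ũ : Ω → ℝ be twice differentiable with u(p) > 0 and ũ(p) > 0 for all p ∈ Ω. Suppose D Δu = μ u and D̃ Δũ = μ ũ at every point of Ω, Γ μ u = Γ̃ μ ũ at every point of Ω (same photoacoustic data and same absorption coefficient μ), and u(x₀) = ũ(x₀) (the fluence value at one point is known). Then u = ũ on Ω, D = D̃ and Γ = Γ̃. -/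
/-- Proposition 3.3, fluence known at one point and `μ` known: if two twice
differentiable positive fluences `u, ũ` on a nonempty open `Ω` satisfy `D Δu = μ u`,
`D̃ Δũ = μ ũ`, produce the same data `Γμu = Γ̃μũ`, and agree at one point `x₀`, then
`u = ũ`, `D = D̃` and `Γ = Γ̃`. -/
theorem stmt9 (Ω : Set E3) (hΩ : IsOpen Ω) (hne : Ω.Nonempty) (x₀ : E3) (hx₀ : x₀ ∈ Ω)
    (mu D Γ Dt Γt : ℝ) (hmu : 0 < mu) (hD : 0 < D) (hΓ : 0 < Γ) (hDt : 0 < Dt) (hΓt : 0 < Γt)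
    (u ut : E3 → ℝ)
    (hdiff : ∀ p ∈ Ω, DifferentiableAt ℝ u p ∧ DifferentiableAt ℝ (fderiv ℝ u) p)
    (hdifft : ∀ p ∈ Ω, DifferentiableAt ℝ ut p ∧ DifferentiableAt ℝ (fderiv ℝ ut) p)
    (hpos : ∀ p ∈ Ω, 0 < u p) (hposT : ∀ p ∈ Ω, 0 < ut p)
    (heq : ∀ p ∈ Ω, D * lap u p = mu * u p)
    (heqt : ∀ p ∈ Ω, Dt * lap ut p = mu * ut p)
    (hdata : ∀ p ∈ Ω, Γ * mu * u p = Γt * mu * ut p)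
    (hval : u x₀ = ut x₀) :
    (∀ p ∈ Ω, u p = ut p) ∧ D = Dt ∧ Γ = Γt := by
  -- Step 1: Γ = Γt from the data at x₀.
  have hΓeq : Γ = Γt := by
    have h := hdata x₀ hx₀
    rw [hval] at h
    have hu := hposT x₀ hx₀
    have : Γ * (mu * ut x₀) = Γt * (mu * ut x₀) := by ring_nf; ring_nf at h; linarith
    exact mul_right_cancel₀ (by positivity) this
  -- Step 2: u = ut on Ω.
  have hue : ∀ p ∈ Ω, u p = ut p := by
    intro p hp
    have h := hdata p hp
    rw [hΓeq] at h
    have : Γt * mu ≠ 0 := by positivity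
    have h' : Γt * mu * u p = Γt * mu * ut p := by linarith [h]
    exact mul_left_cancel₀ this h'
  refine ⟨hue, ?_, hΓeq⟩
  -- Step 3: lap u = lap ut at x₀.
  have hev : u =ᶠ[nhds x₀] ut :=
    Filter.eventuallyEq_of_mem (hΩ.mem_nhds hx₀) hue
  have hfd : fderiv ℝ u =ᶠ[nhds x₀] fderiv ℝ ut := hev.fderiv (𝕜 := ℝ)
  have hlap : lap u x₀ = lap ut x₀ := by
    unfold lap
    refine Finset.sum_congr rfl fun i _ => ?_
    have h1 : (fun q => fderiv ℝ u q (EuclideanSpace.single i 1)) =ᶠ[nhds x₀]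
        (fun q => fderiv ℝ ut q (EuclideanSpace.single i 1)) := by
      filter_upwards [hfd] with q hq
      rw [hq]
    rw [h1.fderiv_eq]
  -- Step 4: D = Dt.
  have h1 := heq x₀ hx₀
  have h2 := heqt x₀ hx₀
  rw [← hval, ← hlap] at h2
  have hlap0 : lap u x₀ ≠ 0 := by
    intro h0
    rw [h0, mul_zero] at h1
    have := hpos x₀ hx₀
    nlinarith
  have : D * lap u x₀ = Dt * lap u x₀ := by linarith
  exact mul_right_cancel₀ hlap0 this
end

section
/- Let v, w ∈ ℝ³ with v ≠ 0, let ν ∈ ℝ³ be a unit vector, and let D_m ≥ D_n > 0. Suppose v − ⟨v, ν⟩ν = w − ⟨w, ν⟩ν and D_m ⟨v, ν⟩ = D_n ⟨w, ν⟩. Let c ∈ [0,1] satisfy ⟨v, ν⟩²/‖v‖² ≥ c. Then w ≠ 0 and |log‖w‖ − log‖v‖| ≥ (1/2)·log( 1 + ( e^{2·|log D_m − log D_n|} − 1 )·c ) ≥ 0. -/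
open RealInnerProductSpace

lemma decomp_aux (u ν : E3) (hν : ‖ν‖ = 1) :
    ‖u‖ ^ 2 = ‖u - ⟪u, ν⟫ • ν‖ ^ 2 + ⟪u, ν⟫ ^ 2 := by
  have hνν : ⟪ν, ν⟫ = (1 : ℝ) := by
    rw [real_inner_self_eq_norm_sq, hν]; norm_num
  have horth : ⟪u - ⟪u, ν⟫ • ν, ⟪u, ν⟫ • ν⟫ = (0 : ℝ) := by
    rw [inner_sub_left, real_inner_smul_right, real_inner_smul_right,
      real_inner_smul_left, hνν]
    ring
  have h := norm_add_sq_real (u - ⟪u, ν⟫ • ν) (⟪u, ν⟫ • ν)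
  have hns : ‖(⟪u, ν⟫ : ℝ) • ν‖ = |⟪u, ν⟫| := by
    rw [norm_smul, hν, Real.norm_eq_abs, mul_one]
  have hrw : u - ⟪u, ν⟫ • ν + ⟪u, ν⟫ • ν = u := by abel
  rw [hrw, horth, hns] at h
  rw [h, sq_abs]
  ring

/-- lower bound `γ(|log D_m − log D_n|)` of Section 4.1: under agreement of
tangential components, the transmission condition, `D_m ≥ D_n > 0`, `v ≠ 0` and
`⟨v,ν⟩²/‖v‖² ≥ c` with `c ∈ [0,1]`, one has `w ≠ 0` and
`|log‖w‖ − log‖v‖| ≥ ½ log(1 + (e^{2|log D_m − log D_n|} − 1)c) ≥ 0`. -/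
theorem stmt13 (v w ν : E3) (hv : v ≠ 0) (hν : ‖ν‖ = 1)
    (Dm Dn : ℝ) (hDn : 0 < Dn) (hDmn : Dn ≤ Dm)
    (htang : v - ⟪v, ν⟫ • ν = w - ⟪w, ν⟫ • ν)
    (htrans : Dm * ⟪v, ν⟫ = Dn * ⟪w, ν⟫)
    (c : ℝ) (hc0 : 0 ≤ c) (hc1 : c ≤ 1)
    (hc : c ≤ ⟪v, ν⟫ ^ 2 / ‖v‖ ^ 2) :
    w ≠ 0 ∧
    (1 / 2) * Real.log (1 + (Real.exp (2 * |Real.log Dm - Real.log Dn|) - 1) * c)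
      ≤ |Real.log ‖w‖ - Real.log ‖v‖| ∧
    0 ≤ (1 / 2) * Real.log (1 + (Real.exp (2 * |Real.log Dm - Real.log Dn|) - 1) * c) := by
  have hDm : (0 : ℝ) < Dm := lt_of_lt_of_le hDn hDmn
  have hvpos : 0 < ‖v‖ := norm_pos_iff.mpr hv
  have hr1 : (1 : ℝ) ≤ Dm / Dn := (one_le_div hDn).mpr hDmn
  have hr2 : (1 : ℝ) ≤ (Dm / Dn) ^ 2 := by nlinarith
  have hsrt : ⟪w, ν⟫ = (Dm / Dn) * ⟪v, ν⟫ := by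
    rw [div_mul_eq_mul_div, eq_div_iff hDn.ne']
    linarith [htrans]
  -- exp term equals (Dm/Dn)^2
  have hE : Real.exp (2 * |Real.log Dm - Real.log Dn|) = (Dm / Dn) ^ 2 := by
    have habs : |Real.log Dm - Real.log Dn| = Real.log Dm - Real.log Dn :=
      abs_of_nonneg (by linarith [Real.log_le_log hDn hDmn])
    rw [habs, two_mul, Real.exp_add, ← sq, Real.exp_sub, Real.exp_log hDm,
      Real.exp_log hDn]
  -- decompositions
  have hdv := decomp_aux v ν hν
  have hdw := decomp_aux w ν hν
  rw [← htang] at hdw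
  have hweq : ‖w‖ ^ 2 = ‖v‖ ^ 2 + ((Dm / Dn) ^ 2 - 1) * ⟪v, ν⟫ ^ 2 := by
    rw [hdw, hsrt, hdv]; ring
  have hct : c * ‖v‖ ^ 2 ≤ ⟪v, ν⟫ ^ 2 := by
    have := (le_div_iff₀ (by positivity : (0:ℝ) < ‖v‖ ^ 2)).mp hc
    linarith
  have hr2' : (0:ℝ) ≤ (Dm / Dn) ^ 2 - 1 := by linarith
  have hkey : ‖v‖ ^ 2 * (1 + ((Dm / Dn) ^ 2 - 1) * c) ≤ ‖w‖ ^ 2 := by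
    rw [hweq]
    have h := mul_le_mul_of_nonneg_left hct hr2'
    nlinarith [h]
  have h1le : (1 : ℝ) ≤ 1 + ((Dm / Dn) ^ 2 - 1) * c := by
    have := mul_nonneg hr2' hc0
    linarith
  have hwv : ‖v‖ ^ 2 ≤ ‖w‖ ^ 2 := by
    have := mul_nonneg hr2' (sq_nonneg (⟪v, ν⟫ : ℝ))
    linarith [hweq]
  have hvw : ‖v‖ ≤ ‖w‖ := by
    nlinarith [hwv, norm_nonneg v, norm_nonneg w]
  have hwpos : 0 < ‖w‖ := lt_of_lt_of_le hvpos hvw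
  have hw0 : w ≠ 0 := norm_pos_iff.mp hwpos
  refine ⟨hw0, ?_, ?_⟩
  · have hlog : Real.log (1 + ((Dm / Dn) ^ 2 - 1) * c)
        ≤ Real.log (‖w‖ ^ 2 / ‖v‖ ^ 2) := by
      apply Real.log_le_log (by linarith)
      rw [le_div_iff₀ (by positivity)]
      linarith [hkey]
    have hlv : Real.log (‖w‖ ^ 2 / ‖v‖ ^ 2) =
        2 * Real.log ‖w‖ - 2 * Real.log ‖v‖ := by
      rw [Real.log_div (by positivity) (by positivity), Real.log_pow, Real.log_pow]
      push_cast; ring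
    have habs : |Real.log ‖w‖ - Real.log ‖v‖| = Real.log ‖w‖ - Real.log ‖v‖ :=
      abs_of_nonneg (by linarith [Real.log_le_log hvpos hvw])
    rw [hE, habs]
    rw [hlv] at hlog
    linarith
  · rw [hE]
    have := Real.log_nonneg h1le
    linarith
end

section
/- Let v, w ∈ ℝ³ with v ≠ 0, let ν ∈ ℝ³ be a unit vector, and let D_m ≥ D_n > 0. Suppose v − ⟨v, ν⟩ν = w − ⟨w, ν⟩ν and D_m ⟨v, ν⟩ = D_n ⟨w, ν⟩, and let c ∈ [0,1] satisfy ⟨v, ν⟩²/‖v‖² ≥ c. Let a_m, a_n > 0. Then | log(a_n·‖w‖) − log(a_m·‖v‖) | ≥ (1/2)·log( 1 + ( e^{2·|log D_m − log D_n|} − 1 )·c ) − |log a_n − log a_m|. -/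
open RealInnerProductSpace

set_option maxHeartbeats 1000000 in
/-- inequality (jump_D) of Section 4.1: under the hypotheses of the
gradient-jump bound and with positive factors `a_m, a_n` (representing `Γ_m μ_m, Γ_n μ_n`),
`|log(a_n‖w‖) − log(a_m‖v‖)| ≥ ½ log(1 + (e^{2|log D_m − log D_n|} − 1)c) − |log a_n − log a_m|`. -/
theorem stmt14 (v w ν : E3) (hv : v ≠ 0) (hν : ‖ν‖ = 1)
    (Dm Dn : ℝ) (hDn : 0 < Dn) (hDmn : Dn ≤ Dm)
    (htang : v - ⟪v, ν⟫ • ν = w - ⟪w, ν⟫ • ν)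
    (htrans : Dm * ⟪v, ν⟫ = Dn * ⟪w, ν⟫)
    (c : ℝ) (hc0 : 0 ≤ c) (hc1 : c ≤ 1)
    (hc : c ≤ ⟪v, ν⟫ ^ 2 / ‖v‖ ^ 2)
    (am an : ℝ) (ham : 0 < am) (han : 0 < an) :
    (1 / 2) * Real.log (1 + (Real.exp (2 * |Real.log Dm - Real.log Dn|) - 1) * c)
        - |Real.log an - Real.log am|
      ≤ |Real.log (an * ‖w‖) - Real.log (am * ‖v‖)| := by
  have hvn : (0:ℝ) < ‖v‖ := norm_pos_iff.mpr hv
  have hDm : 0 < Dm := lt_of_lt_of_le hDn hDmn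
  set r : ℝ := Dm / Dn with hrdef
  have hr1 : 1 ≤ r := (one_le_div hDn).mpr hDmn
  have hr0 : 0 < r := lt_of_lt_of_le one_pos hr1
  have hν2 : ⟪ν, ν⟫ = (1:ℝ) := by
    rw [real_inner_self_eq_norm_sq, hν]; norm_num
  have pyth : ∀ x : E3, ‖x‖^2 = ‖x - ⟪x, ν⟫ • ν‖^2 + ⟪x, ν⟫^2 := by
    intro x
    have horth : ⟪x - ⟪x, ν⟫ • ν, ⟪x, ν⟫ • ν⟫ = (0:ℝ) := by
      simp only [inner_sub_left, real_inner_smul_left, real_inner_smul_right, hν2]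
      ring
    have h1 := norm_add_sq_real (x - ⟪x, ν⟫ • ν) (⟪x, ν⟫ • ν)
    rw [sub_add_cancel, horth, norm_smul, hν, mul_one] at h1
    rw [h1]
    simp only [Real.norm_eq_abs, sq_abs]
    ring
  have hvp := pyth v
  have hwp := pyth w
  rw [htang] at hvp
  set tv : ℝ := ⟪v, ν⟫ with htv
  set tw : ℝ := ⟪w, ν⟫ with htw
  have hwν : tw = r * tv := by
    rw [hrdef]
    field_simp
    linarith [htrans]
  have hsq : tw^2 = r^2 * tv^2 := by rw [hwν]; ring
  have key : ‖w‖^2 = ‖v‖^2 + (r^2 - 1) * tv^2 := by linarith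
  have hcv : c * ‖v‖^2 ≤ tv^2 := by
    rw [le_div_iff₀ (by positivity : (0:ℝ) < ‖v‖^2)] at hc
    linarith
  have hr2 : 0 ≤ r^2 - 1 := by nlinarith
  have hwv : ‖v‖^2 * (1 + (r^2 - 1) * c) ≤ ‖w‖^2 := by nlinarith
  have hvw : ‖v‖ ≤ ‖w‖ := by nlinarith [norm_nonneg w, norm_nonneg v]
  have hwn : (0:ℝ) < ‖w‖ := lt_of_lt_of_le hvn hvw
  have habs : |Real.log Dm - Real.log Dn| = Real.log r := by
    rw [abs_of_nonneg (sub_nonneg.mpr (Real.log_le_log hDn hDmn)),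
      Real.log_div hDm.ne' hDn.ne']
  have hexp : Real.exp (2 * |Real.log Dm - Real.log Dn|) = r^2 := by
    rw [habs, show (2:ℝ) * Real.log r = Real.log (r^2) by
      rw [Real.log_pow]; push_cast; ring, Real.exp_log (by positivity)]
  rw [hexp]
  rw [Real.log_mul han.ne' hwn.ne', Real.log_mul ham.ne' hvn.ne']
  set A := Real.log an - Real.log am with hA
  set B := Real.log ‖w‖ - Real.log ‖v‖ with hB
  have hrw : Real.log an + Real.log ‖w‖ - (Real.log am + Real.log ‖v‖) = B + A := by
    rw [hA, hB]; ring
  rw [hrw]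
  have htri : |B| - |A| ≤ |B + A| := by
    have := abs_sub_abs_le_abs_sub B (-A)
    simpa [sub_neg_eq_add] using this
  have hmain : (1 / 2) * Real.log (1 + (r^2 - 1) * c) ≤ B := by
    have hpos : (0:ℝ) < 1 + (r^2 - 1) * c := by nlinarith
    have h1 : 1 + (r^2 - 1) * c ≤ ‖w‖^2 / ‖v‖^2 := by
      rw [le_div_iff₀ (by positivity : (0:ℝ) < ‖v‖^2)]
      nlinarith
    have h2 : Real.log (1 + (r^2 - 1) * c) ≤ Real.log (‖w‖^2 / ‖v‖^2) :=
      Real.log_le_log hpos h1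
    rw [Real.log_div (by positivity) (by positivity), Real.log_pow, Real.log_pow] at h2
    rw [hB]
    push_cast at h2
    linarith
  have hBabs : B ≤ |B| := le_abs_self B
  linarith
end

section
/- Let M ≥ 1, let w : Fin M → Fin M → ℝ be symmetric with w n k ≥ 0 for all n, k, and let d : Fin M → Fin M → ℝ be antisymmetric (d k n = −d n k). Define F : (Fin M → ℝ) → ℝ by F(a) = Σ_{n < k} w n k · (a k − a n − d n k)². Suppose the graph on Fin M with an edge between n and k whenever w n k > 0 is connected. Then for every c ∈ ℝ there exists a unique â : Fin M → ℝ with â 0 = c minimizing F over the set { a : Fin M → ℝ | a 0 = c }. -/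
/-- uniqueness for the least-squares problem (17) of Section 4.2: for
symmetric nonnegative interface weights `w` and antisymmetric jump data `d`, if the graph
with an edge between `n` and `k` whenever `w n k > 0` is connected, then for every `c`
the functional `F(a) = Σ_{n<k} w n k (a k − a n − d n k)²` has a unique minimizer over
`{a | a 0 = c}`. -/
theorem stmt17 (M : ℕ) (hM : 0 < M)
    (w : Fin M → Fin M → ℝ) (hsymm : ∀ n k, w n k = w k n) (hnonneg : ∀ n k, 0 ≤ w n k)
    (d : Fin M → Fin M → ℝ) (hanti : ∀ n k, d k n = - d n k)
    (F : (Fin M → ℝ) → ℝ)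
    (hF : ∀ a : Fin M → ℝ,
      F a = ∑ n : Fin M, ∑ k : Fin M, if n < k then w n k * (a k - a n - d n k) ^ 2 else 0)
    (hconn : (SimpleGraph.fromRel fun n k => 0 < w n k).Connected) :
    ∀ c : ℝ, ∃! ahat : Fin M → ℝ, ahat ⟨0, hM⟩ = c ∧
      ∀ a : Fin M → ℝ, a ⟨0, hM⟩ = c → F ahat ≤ F a := by
  classical
  intro c
  set z : Fin M := ⟨0, hM⟩ with hz
  set G := SimpleGraph.fromRel fun n k => 0 < w n k with hG
  -- each summand is nonnegative
  have hterm_nonneg : ∀ (a : Fin M → ℝ) (n k : Fin M),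
      (0:ℝ) ≤ (if n < k then w n k * (a k - a n - d n k) ^ 2 else 0) := by
    intro a n k
    split_ifs
    · exact mul_nonneg (hnonneg n k) (sq_nonneg _)
    · exact le_refl 0
  have hF_nonneg : ∀ a, 0 ≤ F a := by
    intro a
    rw [hF]
    exact Finset.sum_nonneg fun n _ => Finset.sum_nonneg fun k _ => hterm_nonneg a n k
  have hFcont : Continuous F := by
    have hFe : F = fun a : Fin M → ℝ =>
        ∑ n : Fin M, ∑ k : Fin M, if n < k then w n k * (a k - a n - d n k) ^ 2 else 0 :=
      funext hF
    rw [hFe]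
    apply continuous_finset_sum
    intro n _
    apply continuous_finset_sum
    intro k _
    split_ifs
    · fun_prop
    · exact continuous_const
  -- each term is bounded by any bound on F
  have hterm_le : ∀ (a : Fin M → ℝ) (B : ℝ), F a ≤ B → ∀ n k : Fin M, n < k →
      w n k * (a k - a n - d n k) ^ 2 ≤ B := by
    intro a B hB n k hnk
    have h1 : (if n < k then w n k * (a k - a n - d n k) ^ 2 else 0) ≤
        ∑ k' : Fin M, if n < k' then w n k' * (a k' - a n - d n k') ^ 2 else 0 :=
      Finset.single_le_sum (fun k' _ => hterm_nonneg a n k') (Finset.mem_univ k)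
    have h2 : (∑ k' : Fin M, if n < k' then w n k' * (a k' - a n - d n k') ^ 2 else 0) ≤
        ∑ n' : Fin M, ∑ k' : Fin M, if n' < k' then w n' k' * (a k' - a n' - d n' k') ^ 2 else 0 :=
      Finset.single_le_sum
        (fun n' _ => Finset.sum_nonneg fun k' _ => hterm_nonneg a n' k') (Finset.mem_univ n)
    rw [if_pos hnk] at h1
    have := hF a
    linarith
  -- bound on differences along edges
  have hedge : ∀ (a : Fin M → ℝ) (B : ℝ), F a ≤ B → ∀ n k : Fin M, 0 < w n k →
      |a k - a n| ≤ |d n k| + Real.sqrt (B / w n k) := by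
    have main : ∀ (a : Fin M → ℝ) (B : ℝ), F a ≤ B → ∀ n k : Fin M, n < k → 0 < w n k →
        |a k - a n| ≤ |d n k| + Real.sqrt (B / w n k) := by
      intro a B hB n k hnk hw
      have h1 := hterm_le a B hB n k hnk
      have h2 : (a k - a n - d n k) ^ 2 ≤ B / w n k := by
        rw [le_div_iff₀ hw]; linarith [mul_comm (w n k) ((a k - a n - d n k) ^ 2)]
      have h3 : |a k - a n - d n k| ≤ Real.sqrt (B / w n k) := by
        rw [← Real.sqrt_sq_eq_abs]
        exact Real.sqrt_le_sqrt h2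
      have h4 : |a k - a n| ≤ |a k - a n - d n k| + |d n k| := by
        have := abs_add_le (a k - a n - d n k) (d n k)
        have he : a k - a n - d n k + d n k = a k - a n := by ring
        rw [he] at this
        exact this
      linarith
    intro a B hB n k hw
    rcases lt_trichotomy n k with h | h | h
    · exact main a B hB n k h hw
    · subst h
      have : |a n - a n| = 0 := by simp
      rw [this]
      positivity
    · have hw' : 0 < w k n := by rw [← hsymm n k]; exact hw
      have := main a B hB k n h hw'
      have e1 : |a n - a k| = |a k - a n| := abs_sub_comm _ _
      have e2 : |d k n| = |d n k| := by rw [hanti n k, abs_neg]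
      have e3 : w k n = w n k := (hsymm n k).symm
      rw [e1, e2, e3] at this
      exact this
  -- bound along walks
  have hwalk : ∀ (a : Fin M → ℝ) (K : ℝ),
      (∀ n k : Fin M, G.Adj n k → |a k - a n| ≤ K) →
      ∀ (u v : Fin M) (p : G.Walk u v), |a v - a u| ≤ (p.length : ℝ) * K := by
    intro a K hK u v p
    induction p with
    | nil => simp
    | @cons u x v h p ih =>
      have h1 := hK u x h
      have h2 : |a v - a u| ≤ |a v - a x| + |a x - a u| := abs_sub_le _ _ _
      have h3 : |a v - a x| = |a v - a x| := rfl
      have hlen : (((SimpleGraph.Walk.cons h p).length : ℕ) : ℝ) = (p.length : ℝ) + 1 := by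
        rw [SimpleGraph.Walk.length_cons]; push_cast; ring
      rw [hlen]
      have : (p.length : ℝ) + 1 = (p.length : ℝ) + 1 := rfl
      nlinarith [ih]
  -- fixed walks from z to each vertex
  have hreach : ∀ k : Fin M, Nonempty (G.Walk z k) := fun k => hconn.preconnected z k
  let p : ∀ k : Fin M, G.Walk z k := fun k => (hreach k).some
  -- reference point and bound
  set a0 : Fin M → ℝ := fun _ => c with ha0
  have ha0z : a0 z = c := rfl
  set B := F a0 with hB
  set K : ℝ := ∑ n : Fin M, ∑ k : Fin M, (|d n k| + Real.sqrt (B / w n k)) with hK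
  have hKterm_nonneg : ∀ n k : Fin M, (0:ℝ) ≤ |d n k| + Real.sqrt (B / w n k) := by
    intro n k; positivity
  have hK0 : 0 ≤ K := Finset.sum_nonneg fun n _ => Finset.sum_nonneg fun k _ => hKterm_nonneg n k
  have hK_ge : ∀ n k : Fin M, |d n k| + Real.sqrt (B / w n k) ≤ K := by
    intro n k
    have h1 : |d n k| + Real.sqrt (B / w n k) ≤
        ∑ k' : Fin M, (|d n k'| + Real.sqrt (B / w n k')) :=
      Finset.single_le_sum (fun k' _ => hKterm_nonneg n k') (Finset.mem_univ k)
    have h2 : (∑ k' : Fin M, (|d n k'| + Real.sqrt (B / w n k'))) ≤ K := by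
      rw [hK]
      exact Finset.single_le_sum
        (fun n' _ => Finset.sum_nonneg fun k' _ => hKterm_nonneg n' k') (Finset.mem_univ n)
    linarith
  have hadjK : ∀ (a : Fin M → ℝ), F a ≤ B → ∀ n k : Fin M, G.Adj n k → |a k - a n| ≤ K := by
    intro a hFa n k hadjhyp
    rw [hG, SimpleGraph.fromRel_adj] at hadjhyp
    obtain ⟨_, hw | hw⟩ := hadjhyp
    · exact (hedge a B hFa n k hw).trans (hK_ge n k)
    · have : 0 < w n k := by rw [hsymm n k]; exact hw
      exact (hedge a B hFa n k this).trans (hK_ge n k)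
  set R : ℝ := |c| + (∑ k : Fin M, ((p k).length : ℝ)) * K with hR
  have hR0 : 0 ≤ R := by
    have : 0 ≤ (∑ k : Fin M, ((p k).length : ℝ)) * K :=
      mul_nonneg (Finset.sum_nonneg fun k _ => Nat.cast_nonneg _) hK0
    rw [hR]; positivity
  -- the sublevel set is bounded
  have hbound : ∀ a : Fin M → ℝ, a z = c → F a ≤ B → ∀ k : Fin M, |a k| ≤ R := by
    intro a haz hFa k
    have h1 : |a k - a z| ≤ ((p k).length : ℝ) * K := hwalk a K (hadjK a hFa) z k (p k)
    have h2 : ((p k).length : ℝ) ≤ ∑ k' : Fin M, ((p k').length : ℝ) :=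
      Finset.single_le_sum (f := fun k' : Fin M => ((p k').length : ℝ))
        (fun k' _ => Nat.cast_nonneg _) (Finset.mem_univ k)
    have h3 : ((p k).length : ℝ) * K ≤ (∑ k' : Fin M, ((p k').length : ℝ)) * K :=
      mul_le_mul_of_nonneg_right h2 hK0
    have h4 : |a k| ≤ |a k - a z| + |a z| := by
      have := abs_add_le (a k - a z) (a z)
      have he : a k - a z + a z = a k := by ring
      rw [he] at this; exact this
    rw [haz] at h1 h4
    rw [hR]
    linarith
  -- the constraint-sublevel set
  set S : Set (Fin M → ℝ) := {a | a z = c ∧ F a ≤ B} with hS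
  have hS_closed : IsClosed S := by
    have : S = {a : Fin M → ℝ | a z = c} ∩ {a : Fin M → ℝ | F a ≤ B} := rfl
    rw [this]
    exact (isClosed_eq (continuous_apply z) continuous_const).inter
      (isClosed_le hFcont continuous_const)
  have hS_sub : S ⊆ Metric.closedBall 0 R := by
    intro a ha
    rw [mem_closedBall_zero_iff]
    rw [pi_norm_le_iff_of_nonneg hR0]
    intro k
    exact hbound a ha.1 ha.2 k
  have hS_compact : IsCompact S :=
    Metric.isCompact_of_isClosed_isBounded hS_closed
      (Metric.isBounded_closedBall.subset hS_sub)
  have hS_ne : S.Nonempty := ⟨a0, ha0z, le_refl _⟩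
  obtain ⟨ahat, hahatS, hmin⟩ := hS_compact.exists_isMinOn hS_ne hFcont.continuousOn
  have hahatz : ahat z = c := hahatS.1
  have hminall : ∀ a : Fin M → ℝ, a z = c → F ahat ≤ F a := by
    intro a ha
    by_cases hOB : F a ≤ B
    · exact hmin (Set.mem_setOf.mpr ⟨ha, hOB⟩)
    · push_neg at hOB
      have h5 : F ahat ≤ F a0 := hmin (Set.mem_setOf.mpr ⟨ha0z, le_refl B⟩)
      linarith
  refine ⟨ahat, ⟨hahatz, hminall⟩, ?_⟩
  -- uniqueness
  rintro y ⟨hyz, hymin⟩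
  have h1 : F ahat ≤ F y := hminall y hyz
  have h2 : F y ≤ F ahat := hymin ahat hahatz
  have heq : F y = F ahat := le_antisymm h2 h1
  set mid : Fin M → ℝ := fun i => (y i + ahat i) / 2 with hmid
  have hmidz : mid z = c := by
    have hh : mid z = (y z + ahat z) / 2 := rfl
    rw [hh, hyz, hahatz]; ring
  have hmid_ge : F ahat ≤ F mid := hminall mid hmidz
  set Qs : ℝ := ∑ n : Fin M, ∑ k : Fin M,
      if n < k then w n k * ((y k - ahat k) - (y n - ahat n)) ^ 2 else 0 with hQs
  have hident : F y + F ahat - 2 * F mid = Qs / 2 := by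
    rw [hF y, hF ahat, hF mid, hQs, Finset.mul_sum, Finset.sum_div,
      ← Finset.sum_add_distrib, ← Finset.sum_sub_distrib]
    apply Finset.sum_congr rfl
    intro n _
    rw [Finset.mul_sum, Finset.sum_div, ← Finset.sum_add_distrib, ← Finset.sum_sub_distrib]
    apply Finset.sum_congr rfl
    intro k _
    split_ifs with h
    · simp only [hmid]
      ring
    · norm_num
  -- Qs is nonpositive ...
  have hQterm_nonneg : ∀ n k : Fin M,
      (0:ℝ) ≤ (if n < k then w n k * ((y k - ahat k) - (y n - ahat n)) ^ 2 else 0) := by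
    intro n k
    split_ifs
    · exact mul_nonneg (hnonneg n k) (sq_nonneg _)
    · exact le_refl 0
  have hQs_ge : 0 ≤ Qs := by
    rw [hQs]
    exact Finset.sum_nonneg fun n _ => Finset.sum_nonneg fun k _ => hQterm_nonneg n k
  have hQs_le : Qs ≤ 0 := by linarith
  have hQs0 : (∑ n : Fin M, ∑ k : Fin M,
      if n < k then w n k * ((y k - ahat k) - (y n - ahat n)) ^ 2 else 0) = 0 := by
    rw [← hQs]; linarith
  -- every summand vanishes
  have hterm0 : ∀ n k : Fin M,
      (if n < k then w n k * ((y k - ahat k) - (y n - ahat n)) ^ 2 else 0) = 0 := by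
    intro n k
    have h1 := (Finset.sum_eq_zero_iff_of_nonneg
      (fun n' _ => Finset.sum_nonneg fun k' _ => hQterm_nonneg n' k')).mp hQs0
    have h2 := (Finset.sum_eq_zero_iff_of_nonneg
      (fun k' _ => hQterm_nonneg n k')).mp (h1 n (Finset.mem_univ n))
    exact h2 k (Finset.mem_univ k)
  -- differences are constant across edges
  have hlt_eq : ∀ n k : Fin M, n < k → 0 < w n k → y n - ahat n = y k - ahat k := by
    intro n k hnk hw
    have h1 := hterm0 n k
    rw [if_pos hnk] at h1
    have h2 : ((y k - ahat k) - (y n - ahat n)) ^ 2 = 0 := by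
      rcases mul_eq_zero.mp h1 with h | h
      · exact absurd h (ne_of_gt hw)
      · exact h
    have h3 : (y k - ahat k) - (y n - ahat n) = 0 := by
      exact pow_eq_zero_iff (by norm_num) |>.mp h2
    linarith
  have hvadj : ∀ n k : Fin M, G.Adj n k → y n - ahat n = y k - ahat k := by
    intro n k hadjnk
    rw [hG, SimpleGraph.fromRel_adj] at hadjnk
    obtain ⟨hne, hw⟩ := hadjnk
    have hwnk : 0 < w n k := by
      rcases hw with hw | hw
      · exact hw
      · rw [hsymm n k]; exact hw
    rcases lt_trichotomy n k with h | h | h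
    · exact hlt_eq n k h hwnk
    · exact absurd h hne
    · exact (hlt_eq k n h (by rw [← hsymm n k]; exact hwnk)).symm
  have hwalk_eq : ∀ (u v : Fin M) (q : G.Walk u v), y u - ahat u = y v - ahat v := by
    intro u v q
    induction q with
    | nil => rfl
    | cons h q ih => exact (hvadj _ _ h).trans ih
  funext k
  have hk := hwalk_eq z k ((hreach k).some)
  rw [hyz, hahatz] at hk
  linarith
end
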